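/- The involutions β and γ restrict to the 3-torus 𝕋³ with coordinates (x₅,x₆,x₇) as β(x₅,x₆,x₇) = (x₅, -x₆+1/2, -x₇) and γ(x₅,x₆,x₇) = (-x₅+1/2, x₆, -x₇+1/2); each fixes exactly 4 disjoint circles, βγ acts freely, and all 8 fixed circles are pairwise disjoint. -/
import Mathlib

/-- The circle `ℝ/ℤ`. -/
abbrev Circ := AddCircle (1 : ℝ)

/-- The 3-torus `𝕋³ = ℝ³/ℤ³`, with coordinates `(x₅,x₆,x₇)`. -/
abbrev T3 := Fin 3 → Circ

noncomputable def half : Circ := ((1/2 : ℝ) : Circ)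
noncomputable def quarter : Circ := ((1/4 : ℝ) : Circ)
noncomputable def threeQuarter : Circ := ((3/4 : ℝ) : Circ)

/-- The restriction of `β` to `𝕋³₍₅₆₇₎`: `(x₅,x₆,x₇) ↦ (x₅, -x₆+1/2, -x₇)`. -/
noncomputable def bβ (x : T3) : T3 := ![x 0, -x 1 + half, -x 2]

/-- The restriction of `γ` to `𝕋³₍₅₆₇₎`: `(x₅,x₆,x₇) ↦ (-x₅+1/2, x₆, -x₇+1/2)`. -/
noncomputable def bγ (x : T3) : T3 := ![-x 0 + half, x 1, -x 2 + half]

/-- One of the four circles of `Fix(β) = S¹ × {1/4,3/4} × {0,1/2}`. -/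
noncomputable def circβ (b c : Bool) : Set T3 :=
  {x | x 1 = (if b then threeQuarter else quarter) ∧ x 2 = (if c then half else 0)}

/-- One of the four circles of `Fix(γ) = {1/4,3/4} × S¹ × {1/4,3/4}`. -/
noncomputable def circγ (a c : Bool) : Set T3 :=
  {x | x 0 = (if a then threeQuarter else quarter) ∧
       x 2 = (if c then threeQuarter else quarter)}

lemma circ_eq_iff (r s : ℝ) : (r : Circ) = (s : Circ) ↔ ∃ n : ℤ, (n : ℝ) = r - s := by
  rw [← sub_eq_zero, ← QuotientAddGroup.mk_sub, AddCircle.coe_eq_zero_iff]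
  constructor
  · rintro ⟨n, hn⟩; exact ⟨n, by simpa using hn⟩
  · rintro ⟨n, hn⟩; exact ⟨n, by simpa using hn⟩

lemma neg_add_eq_self_iff (c : ℝ) (x : Circ) :
    -x + ((c : ℝ) : Circ) = x ↔
      x = ((c/2 : ℝ) : Circ) ∨ x = ((c/2 + 1/2 : ℝ) : Circ) := by
  induction x using QuotientAddGroup.induction_on with
  | H r =>
    have h1 : -((r : ℝ) : Circ) + ((c : ℝ) : Circ) = (((-r + c : ℝ)) : Circ) := by
      rw [← QuotientAddGroup.mk_neg, ← QuotientAddGroup.mk_add]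
    rw [h1, circ_eq_iff, circ_eq_iff, circ_eq_iff]
    constructor
    · rintro ⟨n, hn⟩
      rcases Int.even_or_odd n with ⟨k, hk⟩ | ⟨k, hk⟩
      · left; exact ⟨-k, by push_cast [hk] at hn ⊢; linarith⟩
      · right; exact ⟨-(k+1), by push_cast [hk] at hn ⊢; linarith⟩
    · rintro (⟨m, hm⟩ | ⟨m, hm⟩)
      · exact ⟨-2*m, by push_cast; linarith⟩
      · exact ⟨-2*m - 1, by push_cast; linarith⟩

lemma fix_half (t : Circ) : -t + half = t ↔ t = quarter ∨ t = threeQuarter := by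
  have h := neg_add_eq_self_iff (1/2) t
  rw [half, quarter, threeQuarter]
  convert h using 4 <;> norm_num

lemma fix_zero (t : Circ) : -t = t ↔ t = 0 ∨ t = half := by
  have h := neg_add_eq_self_iff 0 t
  rw [show ((0:ℝ):Circ) = 0 from rfl, add_zero] at h
  rw [h, half]
  norm_num

lemma circ_ne (r s : ℝ) (h : ∀ n : ℤ, (n : ℝ) ≠ r - s) : (r : Circ) ≠ (s : Circ) := by
  intro hh
  obtain ⟨n, hn⟩ := (circ_eq_iff r s).mp hh
  exact h n hn

lemma quarter_ne_threeQuarter : quarter ≠ threeQuarter :=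
  circ_ne _ _ (fun n hn => by
    have : (2*n : ℤ) = (-1 : ℤ) := by exact_mod_cast (by push_cast; linarith : (2*n : ℝ) = -1)
    omega)

lemma half_ne_zero : half ≠ 0 := by
  rw [half, show (0 : Circ) = ((0:ℝ) : Circ) from rfl]
  exact circ_ne _ _ (fun n hn => by
    have : (2*n : ℤ) = (1 : ℤ) := by exact_mod_cast (by push_cast; linarith : (2*n : ℝ) = 1)
    omega)

lemma zero_ne_quarter : (0 : Circ) ≠ quarter := by
  rw [quarter, show (0 : Circ) = ((0:ℝ) : Circ) from rfl]
  exact circ_ne _ _ (fun n hn => by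
    have : (4*n : ℤ) = (-1 : ℤ) := by exact_mod_cast (by push_cast; linarith : (4*n : ℝ) = -1)
    omega)

lemma zero_ne_threeQuarter : (0 : Circ) ≠ threeQuarter := by
  rw [threeQuarter, show (0 : Circ) = ((0:ℝ) : Circ) from rfl]
  exact circ_ne _ _ (fun n hn => by
    have : (4*n : ℤ) = (-3 : ℤ) := by exact_mod_cast (by push_cast; linarith : (4*n : ℝ) = -3)
    omega)

lemma half_ne_quarter : half ≠ quarter := by
  rw [half, quarter]
  exact circ_ne _ _ (fun n hn => by
    have : (4*n : ℤ) = (1 : ℤ) := by exact_mod_cast (by push_cast; linarith : (4*n : ℝ) = 1)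
    omega)

lemma half_ne_threeQuarter : half ≠ threeQuarter := by
  rw [half, threeQuarter]
  exact circ_ne _ _ (fun n hn => by
    have : (4*n : ℤ) = (-1 : ℤ) := by exact_mod_cast (by push_cast; linarith : (4*n : ℝ) = -1)
    omega)

lemma funeq (x y : T3) : x = y ↔ x 0 = y 0 ∧ x 1 = y 1 ∧ x 2 = y 2 := by
  constructor
  · intro h; exact ⟨by rw [h], by rw [h], by rw [h]⟩
  · rintro ⟨h0, h1, h2⟩; funext i; fin_cases i <;> assumption

lemma ite_inj {u v : Circ} (huv : u ≠ v) {b b' : Bool}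
    (h : (if b then u else v) = (if b' then u else v)) : b = b' := by
  cases b <;> cases b'
  · rfl
  · have h2 : v = u := by simpa using h
    exact absurd h2.symm huv
  · have h2 : u = v := by simpa using h
    exact absurd h2 huv
  · rfl

/-- On `𝕋³₍₅₆₇₎`, each of `β` and `γ` fixes exactly 4 disjoint circles,
`βγ` acts freely, and all 8 fixed circles are pairwise disjoint. -/
theorem fix_beta_gamma_on_T3 :
    -- `Fix(β)` is the union of the four circles `circβ b c`
    (∀ x : T3, bβ x = x ↔ ∃ b c, x ∈ circβ b c) ∧
    -- `Fix(γ)` is the union of the four circles `circγ a c`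
    (∀ x : T3, bγ x = x ↔ ∃ a c, x ∈ circγ a c) ∧
    -- the four `β`-circles are pairwise disjoint, as are the four `γ`-circles
    (∀ b c b' c', (b, c) ≠ (b', c') → Disjoint (circβ b c) (circβ b' c')) ∧
    (∀ a c a' c', (a, c) ≠ (a', c') → Disjoint (circγ a c) (circγ a' c')) ∧
    -- no `β`-circle meets a `γ`-circle
    (∀ b c a c', Disjoint (circβ b c) (circγ a c')) ∧
    -- `βγ` acts freely
    (∀ x : T3, bβ (bγ x) ≠ x) := by
  refine ⟨?_, ?_, ?_, ?_, ?_, ?_⟩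
  · -- Fix(β)
    intro x
    rw [funeq]
    simp only [bβ, Matrix.cons_val_zero, Matrix.cons_val_one, Matrix.head_cons,
      Matrix.cons_val_two, Matrix.tail_cons, eq_self_iff_true, true_and]
    rw [fix_half, fix_zero]
    constructor
    · rintro ⟨h1 | h1, h2 | h2⟩
      · exact ⟨false, false, h1, h2⟩
      · exact ⟨false, true, h1, h2⟩
      · exact ⟨true, false, h1, h2⟩
      · exact ⟨true, true, h1, h2⟩
    · rintro ⟨b, c, h1, h2⟩
      constructor
      · cases b
        · left; simpa using h1
        · right; simpa using h1
      · cases c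
        · left; simpa using h2
        · right; simpa using h2
  · -- Fix(γ)
    intro x
    rw [funeq]
    simp only [bγ, Matrix.cons_val_zero, Matrix.cons_val_one, Matrix.head_cons,
      Matrix.cons_val_two, Matrix.tail_cons, eq_self_iff_true, true_and, and_true]
    rw [fix_half, fix_half]
    constructor
    · rintro ⟨h0 | h0, h2 | h2⟩
      · exact ⟨false, false, h0, h2⟩
      · exact ⟨false, true, h0, h2⟩
      · exact ⟨true, false, h0, h2⟩
      · exact ⟨true, true, h0, h2⟩
    · rintro ⟨a, c, h0, h2⟩
      constructor
      · cases a
        · left; simpa using h0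
        · right; simpa using h0
      · cases c
        · left; simpa using h2
        · right; simpa using h2
  · -- β-circles pairwise disjoint
    intro b c b' c' hne
    rw [Set.disjoint_left]
    rintro x ⟨h1, h2⟩ ⟨h1', h2'⟩
    apply hne
    have hb : b = b' := ite_inj quarter_ne_threeQuarter.symm (h1.symm.trans h1')
    have hc : c = c' := ite_inj half_ne_zero (h2.symm.trans h2')
    rw [hb, hc]
  · -- γ-circles pairwise disjoint
    intro a c a' c' hne
    rw [Set.disjoint_left]
    rintro x ⟨h0, h2⟩ ⟨h0', h2'⟩
    apply hne
    have ha : a = a' := ite_inj quarter_ne_threeQuarter.symm (h0.symm.trans h0')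
    have hc : c = c' := ite_inj quarter_ne_threeQuarter.symm (h2.symm.trans h2')
    rw [ha, hc]
  · -- β-circles disjoint from γ-circles
    intro b c a c'
    rw [Set.disjoint_left]
    rintro x ⟨-, h2⟩ ⟨-, h2'⟩
    cases c <;> cases c' <;> simp only [Bool.false_eq_true, if_true, if_false,
      ite_true, ite_false] at h2 h2'
    · exact zero_ne_quarter (h2.symm.trans h2')
    · exact zero_ne_threeQuarter (h2.symm.trans h2')
    · exact half_ne_quarter (h2.symm.trans h2')
    · exact half_ne_threeQuarter (h2.symm.trans h2')
  · -- βγ acts freely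
    intro x h
    have h2 : bβ (bγ x) 2 = x 2 := by rw [h]
    simp only [bβ, bγ, Matrix.cons_val_zero, Matrix.cons_val_one, Matrix.head_cons,
      Matrix.cons_val_two, Matrix.tail_cons, neg_add, neg_neg] at h2
    -- h2 : x 2 + -half = x 2
    apply half_ne_zero
    have h3 : x 2 + -half = x 2 + 0 := by rw [add_zero]; exact h2
    have h4 : -half = 0 := add_left_cancel h3
    exact neg_eq_zero.mp h4
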